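/- Let S = {a₁,a₂} × {b₁,b₂} be the 2×2 rectangular band and F a field. Then the complete list of two-sided ideals of F[S] is: {0}, J_L ∩ J_R, J_L, J_R, F[ω_S] = J_L + J_R, and F[S]. In particular, F[S] has exactly six two-sided ideals. -/

import Mathlib

inductive L2 : Type | a1 | a2
deriving DecidableEq

instance : Fintype L2 where
  elems := {L2.a1, L2.a2}
  complete x := by cases x <;> simp

instance : Semigroup L2 where
  mul x _ := x
  mul_assoc _ _ _ := rfl

inductive R2 : Type | b1 | b2
deriving DecidableEq

instance : Fintype R2 where
  elems := {R2.b1, R2.b2}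
  complete x := by cases x <;> simp

instance : Semigroup R2 where
  mul _ y := y
  mul_assoc _ _ _ := rfl

abbrev RB : Type := L2 × R2

def IsTwoSidedIdeal {F A : Type*} [Field F] [NonUnitalNonAssocSemiring A]
    [Module F A] (J : Submodule F A) : Prop :=
  ∀ a x : A, x ∈ J → a * x ∈ J ∧ x * a ∈ J

variable (F : Type*) [Field F]

/-- The sum-of-coefficients (augmentation) linear map on `F[S]`. -/
noncomputable def coeffSum : MonoidAlgebra F RB →ₗ[F] F where
  toFun x := ∑ s : RB, x.coeff s
  map_add' x y := by
    simp only [show ∀ s, (x + y).coeff s = x.coeff s + y.coeff s from fun _ => rfl, Finset.sum_add_distrib]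
  map_smul' c x := by
    simp only [show ∀ s, (c • x).coeff s = c * x.coeff s from fun _ => rfl, Finset.mul_sum,
      RingHom.id_apply, smul_eq_mul]

/-- `J_L`: the kernel of the map `F[S] → F[L]` induced by the projection. -/
noncomputable def JL : Submodule F (MonoidAlgebra F RB) :=
  LinearMap.ker ((Finsupp.lmapDomain F F (Prod.fst : RB → L2)).comp
    (MonoidAlgebra.coeffLinearEquiv (R := F) (S := F) (M := RB) : MonoidAlgebra F RB →ₗ[F] RB →₀ F))

/-- `J_R`: the kernel of the map `F[S] → F[R]` induced by the projection. -/
noncomputable def JR : Submodule F (MonoidAlgebra F RB) :=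
  LinearMap.ker ((Finsupp.lmapDomain F F (Prod.snd : RB → R2)).comp
    (MonoidAlgebra.coeffLinearEquiv (R := F) (S := F) (M := RB) : MonoidAlgebra F RB →ₗ[F] RB →₀ F))

/-- The element `C = (a₁,b₁) − (a₁,b₂) − (a₂,b₁) + (a₂,b₂)`. -/
noncomputable def Celt : MonoidAlgebra F RB :=
  MonoidAlgebra.single (L2.a1, R2.b1) 1 - MonoidAlgebra.single (L2.a1, R2.b2) 1
    - MonoidAlgebra.single (L2.a2, R2.b1) 1 + MonoidAlgebra.single (L2.a2, R2.b2) 1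

instance : CoeFun (MonoidAlgebra F RB) (fun _ => RB → F) := ⟨fun x => x.coeff⟩

/- ### Auxiliary lemmas -/

open L2 R2

@[simp] lemma L2.mul_def (x y : L2) : x * y = x := rfl
@[simp] lemma R2.mul_def (x y : R2) : x * y = y := rfl

variable {F}

@[simp] lemma MAadd_apply (x y : MonoidAlgebra F RB) (p : RB) : (x + y) p = x p + y p := rfl
@[simp] lemma MAsub_apply (x y : MonoidAlgebra F RB) (p : RB) : (x - y) p = x p - y p := rfl
@[simp] lemma MAsmul_apply (c : F) (x : MonoidAlgebra F RB) (p : RB) : (c • x) p = c * x p := rfl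
@[simp] lemma MAsingle_apply (p q : RB) (c : F) :
    (MonoidAlgebra.single p c : MonoidAlgebra F RB) q = if p = q then c else 0 :=
  Finsupp.single_apply

lemma ext4 {x y : MonoidAlgebra F RB} (h11 : x (a1, b1) = y (a1, b1))
    (h12 : x (a1, b2) = y (a1, b2)) (h21 : x (a2, b1) = y (a2, b1))
    (h22 : x (a2, b2) = y (a2, b2)) : x = y := by
  ext ⟨i, j⟩; cases i <;> cases j <;> assumption

lemma decomp (x : MonoidAlgebra F RB) :
    x = MonoidAlgebra.single (a1, b1) (x (a1, b1))
      + MonoidAlgebra.single (a1, b2) (x (a1, b2))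
      + MonoidAlgebra.single (a2, b1) (x (a2, b1))
      + MonoidAlgebra.single (a2, b2) (x (a2, b2)) := by
  ext ⟨i, j⟩
  cases i <;> cases j <;> simp

lemma mul_apply' (x y : MonoidAlgebra F RB) (i : L2) (l : R2) :
    (x * y) (i, l) = (x (i, b1) + x (i, b2)) * (y (a1, l) + y (a2, l)) := by
  conv_lhs => rw [decomp x, decomp y]
  cases i <;> cases l <;>
    simp [add_mul, mul_add, MonoidAlgebra.single_mul_single, Prod.mk_mul_mk] <;> ring

variable (F)

lemma mem_JL (x : MonoidAlgebra F RB) :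
    x ∈ JL F ↔ x (a1, b1) + x (a1, b2) = 0 ∧ x (a2, b1) + x (a2, b2) = 0 := by
  have h : Finsupp.lmapDomain F F (Prod.fst : RB → L2) x.coeff
      = Finsupp.single a1 (x (a1, b1) + x (a1, b2))
        + Finsupp.single a2 (x (a2, b1) + x (a2, b2)) := by
    conv_lhs => rw [decomp x]
    simp only [Finsupp.lmapDomain_apply]
    erw [Finsupp.mapDomain_add, Finsupp.mapDomain_add, Finsupp.mapDomain_add]
    simp [Finsupp.mapDomain_single, Finsupp.single_add]
    abel
  rw [JL, LinearMap.mem_ker]; erw [h]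
  constructor
  · intro h0
    constructor
    · have := DFunLike.congr_fun h0 a1
      simpa [Finsupp.single_apply] using this
    · have := DFunLike.congr_fun h0 a2
      simpa [Finsupp.single_apply] using this
  · rintro ⟨h1, h2⟩
    rw [h1, h2]
    simp

lemma mem_JR (x : MonoidAlgebra F RB) :
    x ∈ JR F ↔ x (a1, b1) + x (a2, b1) = 0 ∧ x (a1, b2) + x (a2, b2) = 0 := by
  have h : Finsupp.lmapDomain F F (Prod.snd : RB → R2) x.coeff
      = Finsupp.single b1 (x (a1, b1) + x (a2, b1))
        + Finsupp.single b2 (x (a1, b2) + x (a2, b2)) := by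
    conv_lhs => rw [decomp x]
    simp only [Finsupp.lmapDomain_apply]
    erw [Finsupp.mapDomain_add, Finsupp.mapDomain_add, Finsupp.mapDomain_add]
    simp [Finsupp.mapDomain_single, Finsupp.single_add]
    abel
  rw [JR, LinearMap.mem_ker]; erw [h]
  constructor
  · intro h0
    constructor
    · have := DFunLike.congr_fun h0 b1
      simpa [Finsupp.single_apply] using this
    · have := DFunLike.congr_fun h0 b2
      simpa [Finsupp.single_apply] using this
  · rintro ⟨h1, h2⟩
    rw [h1, h2]
    simp

lemma coeffSum_apply (x : MonoidAlgebra F RB) :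
    coeffSum F x = x (a1, b1) + x (a1, b2) + x (a2, b1) + x (a2, b2) := by
  show ∑ s : RB, x s = _
  rw [show (Finset.univ : Finset RB) = {(a1, b1), (a1, b2), (a2, b1), (a2, b2)} from by decide,
    Finset.sum_insert (by decide), Finset.sum_insert (by decide), Finset.sum_insert (by decide),
    Finset.sum_singleton]
  ring

lemma mem_ker (x : MonoidAlgebra F RB) :
    x ∈ LinearMap.ker (coeffSum F) ↔ x (a1, b1) + x (a1, b2) + x (a2, b1) + x (a2, b2) = 0 := by
  rw [LinearMap.mem_ker, coeffSum_apply]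

lemma isIdeal_JL : IsTwoSidedIdeal (JL F) := by
  intro a x hx
  obtain ⟨h1, h2⟩ := (mem_JL F x).1 hx
  refine ⟨(mem_JL F _).2 ⟨?_, ?_⟩, (mem_JL F _).2 ⟨?_, ?_⟩⟩ <;> simp only [mul_apply']
  · linear_combination (a (a1, b1) + a (a1, b2)) * (h1 + h2)
  · linear_combination (a (a2, b1) + a (a2, b2)) * (h1 + h2)
  · linear_combination (a (a1, b1) + a (a2, b1) + a (a1, b2) + a (a2, b2)) * h1
  · linear_combination (a (a1, b1) + a (a2, b1) + a (a1, b2) + a (a2, b2)) * h2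

lemma isIdeal_JR : IsTwoSidedIdeal (JR F) := by
  intro a x hx
  obtain ⟨h1, h2⟩ := (mem_JR F x).1 hx
  refine ⟨(mem_JR F _).2 ⟨?_, ?_⟩, (mem_JR F _).2 ⟨?_, ?_⟩⟩ <;> simp only [mul_apply']
  · linear_combination (a (a1, b1) + a (a1, b2) + a (a2, b1) + a (a2, b2)) * h1
  · linear_combination (a (a1, b1) + a (a1, b2) + a (a2, b1) + a (a2, b2)) * h2
  · linear_combination (a (a1, b1) + a (a2, b1)) * (h1 + h2)
  · linear_combination (a (a1, b2) + a (a2, b2)) * (h1 + h2)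

lemma isIdeal_ker : IsTwoSidedIdeal (LinearMap.ker (coeffSum F)) := by
  intro a x hx
  have h := (mem_ker F x).1 hx
  refine ⟨(mem_ker F _).2 ?_, (mem_ker F _).2 ?_⟩ <;> simp only [mul_apply']
  · linear_combination (a (a1, b1) + a (a1, b2) + a (a2, b1) + a (a2, b2)) * h
  · linear_combination (a (a1, b1) + a (a1, b2) + a (a2, b1) + a (a2, b2)) * h

/-- The complete list of two-sided ideals of the semigroup algebra of the 2x2
rectangular band: `{0}`, `J_L ∩ J_R`, `J_L`, `J_R`, the augmentation ideal
`F[ω_S]`, and `F[S]`; these six ideals are pairwise distinct. -/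
theorem rectangularBand_ideal_classification :
    (∀ J : Submodule F (MonoidAlgebra F RB),
      IsTwoSidedIdeal J ↔
        (J = ⊥ ∨ J = JL F ⊓ JR F ∨ J = JL F ∨ J = JR F ∨
         J = LinearMap.ker (coeffSum F) ∨ J = ⊤)) ∧
    List.Pairwise (· ≠ ·)
      [(⊥ : Submodule F (MonoidAlgebra F RB)), JL F ⊓ JR F, JL F, JR F,
        LinearMap.ker (coeffSum F), ⊤] := by
  constructor
  · intro J
    constructor
    · intro hJ
      by_cases htop : ∃ x ∈ J, x (a1, b1) + x (a1, b2) + x (a2, b1) + x (a2, b2) ≠ 0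
      · -- J = ⊤
        obtain ⟨x, hxJ, hE⟩ := htop
        have hsingle : ∀ p : RB, MonoidAlgebra.single p (1 : F) ∈ J := by
          intro p
          have hmem : MonoidAlgebra.single p (1 : F) * (x * MonoidAlgebra.single p 1) ∈ J :=
            (hJ _ _ (hJ (MonoidAlgebra.single p 1) x hxJ).2).1
          have heq : MonoidAlgebra.single p (1 : F) * (x * MonoidAlgebra.single p 1)
              = (x (a1, b1) + x (a1, b2) + x (a2, b1) + x (a2, b2))
                  • MonoidAlgebra.single p 1 := by
            obtain ⟨k, l⟩ := p
            apply ext4 <;> cases k <;> cases l <;> simp [mul_apply'] <;> ring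
          rw [heq] at hmem
          have := J.smul_mem (x (a1, b1) + x (a1, b2) + x (a2, b1) + x (a2, b2))⁻¹ hmem
          rwa [smul_smul, inv_mul_cancel₀ hE, one_smul] at this
        have hsingle' : ∀ (p : RB) (c : F), MonoidAlgebra.single p c ∈ J := by
          intro p c
          have := J.smul_mem c (hsingle p)
          rwa [MonoidAlgebra.smul_single', mul_one] at this
        right; right; right; right; right
        refine Submodule.eq_top_iff'.2 fun z => ?_
        rw [decomp z]
        exact add_mem (add_mem (add_mem (hsingle' _ _) (hsingle' _ _)) (hsingle' _ _))
          (hsingle' _ _)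
      · push_neg at htop
        by_cases hC : ∃ x ∈ J, x (a1, b1) + x (a2, b1) ≠ 0
        · -- JL ⊆ J
          obtain ⟨x, hxJ, hCx⟩ := hC
          have hD : ∀ k : L2,
              (MonoidAlgebra.single (k, b1) (1 : F) - MonoidAlgebra.single (k, b2) 1) ∈ J := by
            intro k
            have hm := (hJ (MonoidAlgebra.single (k, b1) 1) x hxJ).1
            have heq : MonoidAlgebra.single (k, b1) (1 : F) * x
                = (x (a1, b1) + x (a2, b1))
                    • (MonoidAlgebra.single (k, b1) (1 : F)
                        - MonoidAlgebra.single (k, b2) 1) := by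
              have hE := htop x hxJ
              apply ext4 <;> cases k <;> simp [mul_apply'] <;> first | linear_combination hE | ring1
            rw [heq] at hm
            have := J.smul_mem (x (a1, b1) + x (a2, b1))⁻¹ hm
            rwa [smul_smul, inv_mul_cancel₀ hCx, one_smul] at this
          have hJLle : JL F ≤ J := by
            intro z hz
            obtain ⟨h1, h2⟩ := (mem_JL F z).1 hz
            have hzeq : z = z (a1, b1)
                  • (MonoidAlgebra.single (a1, b1) (1 : F) - MonoidAlgebra.single (a1, b2) 1)
                + z (a2, b1)
                  • (MonoidAlgebra.single (a2, b1) (1 : F) - MonoidAlgebra.single (a2, b2) 1) := by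
              refine ext4 (by simp) (by simp <;> linear_combination h1) (by simp)
                (by simp <;> linear_combination h2)
            rw [hzeq]
            exact add_mem (J.smul_mem _ (hD a1)) (J.smul_mem _ (hD a2))
          by_cases hR : ∃ y ∈ J, y (a1, b1) + y (a1, b2) ≠ 0
          · -- J = ker
            obtain ⟨y, hyJ, hRy⟩ := hR
            have hE1 : (MonoidAlgebra.single (a1, b1) (1 : F)
                - MonoidAlgebra.single (a2, b1) 1) ∈ J := by
              have hm := (hJ (MonoidAlgebra.single (a1, b1) 1) y hyJ).2
              have heq : y * MonoidAlgebra.single (a1, b1) (1 : F)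
                  = (y (a1, b1) + y (a1, b2))
                      • (MonoidAlgebra.single (a1, b1) (1 : F)
                          - MonoidAlgebra.single (a2, b1) 1) := by
                have hE := htop y hyJ
                apply ext4 <;> simp [mul_apply'] <;> first | linear_combination hE | ring1
              rw [heq] at hm
              have := J.smul_mem (y (a1, b1) + y (a1, b2))⁻¹ hm
              rwa [smul_smul, inv_mul_cancel₀ hRy, one_smul] at this
            right; right; right; right; left
            apply le_antisymm
            · intro z hz
              exact (mem_ker F z).2 (htop z hz)
            · intro z hz
              have hzk := (mem_ker F z).1 hz
              have h1 : z - (z (a1, b1) + z (a1, b2))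
                  • (MonoidAlgebra.single (a1, b1) (1 : F)
                      - MonoidAlgebra.single (a2, b1) 1) ∈ J := by
                refine hJLle ((mem_JL F _).2 ⟨?_, ?_⟩) <;> simp <;> linear_combination hzk
              have h2 := add_mem h1 (J.smul_mem (z (a1, b1) + z (a1, b2)) hE1)
              have h3 : z - (z (a1, b1) + z (a1, b2))
                  • (MonoidAlgebra.single (a1, b1) (1 : F)
                      - MonoidAlgebra.single (a2, b1) 1)
                + (z (a1, b1) + z (a1, b2))
                  • (MonoidAlgebra.single (a1, b1) (1 : F)
                      - MonoidAlgebra.single (a2, b1) 1) = z := by abel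
              rwa [h3] at h2
          · -- J = JL
            push_neg at hR
            right; right; left
            apply le_antisymm _ hJLle
            intro z hz
            refine (mem_JL F z).2 ⟨hR z hz, ?_⟩
            linear_combination htop z hz - hR z hz
        · push_neg at hC
          by_cases hR : ∃ y ∈ J, y (a1, b1) + y (a1, b2) ≠ 0
          · -- J = JR
            obtain ⟨y, hyJ, hRy⟩ := hR
            have hEl : ∀ l : R2, (MonoidAlgebra.single (a1, l) (1 : F)
                - MonoidAlgebra.single (a2, l) 1) ∈ J := by
              intro l
              have hm := (hJ (MonoidAlgebra.single (a1, l) 1) y hyJ).2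
              have heq : y * MonoidAlgebra.single (a1, l) (1 : F)
                  = (y (a1, b1) + y (a1, b2))
                      • (MonoidAlgebra.single (a1, l) (1 : F)
                          - MonoidAlgebra.single (a2, l) 1) := by
                have hE := htop y hyJ
                apply ext4 <;> cases l <;> simp [mul_apply'] <;> first | linear_combination hE | ring1
              rw [heq] at hm
              have := J.smul_mem (y (a1, b1) + y (a1, b2))⁻¹ hm
              rwa [smul_smul, inv_mul_cancel₀ hRy, one_smul] at this
            right; right; right; left
            apply le_antisymm
            · intro z hz
              refine (mem_JR F z).2 ⟨hC z hz, ?_⟩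
              linear_combination htop z hz - hC z hz
            · intro z hz
              obtain ⟨h1, h2⟩ := (mem_JR F z).1 hz
              have hzeq : z = z (a1, b1)
                    • (MonoidAlgebra.single (a1, b1) (1 : F) - MonoidAlgebra.single (a2, b1) 1)
                  + z (a1, b2)
                    • (MonoidAlgebra.single (a1, b2) (1 : F)
                        - MonoidAlgebra.single (a2, b2) 1) := by
                refine ext4 (by simp) (by simp) (by simp <;> linear_combination h1)
                  (by simp <;> linear_combination h2)
              rw [hzeq]
              exact add_mem (J.smul_mem _ (hEl b1)) (J.smul_mem _ (hEl b2))
          · -- J ≤ JL ⊓ JR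
            push_neg at hR
            have hle : J ≤ JL F ⊓ JR F := by
              intro z hz
              refine Submodule.mem_inf.2 ⟨(mem_JL F z).2 ⟨hR z hz, ?_⟩,
                (mem_JR F z).2 ⟨hC z hz, ?_⟩⟩
              · linear_combination htop z hz - hR z hz
              · linear_combination htop z hz - hC z hz
            by_cases hbot : J = ⊥
            · left; exact hbot
            · right; left
              obtain ⟨x, hxJ, hx0⟩ := Submodule.exists_mem_ne_zero_of_ne_bot hbot
              have hr1 := hR x hxJ
              have hc1 := hC x hxJ
              have hE := htop x hxJ
              have hx11 : x (a1, b1) ≠ 0 := by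
                intro h0
                apply hx0
                refine ext4 (by simpa using h0) (by simp <;> linear_combination hr1 - h0)
                  (by simp <;> linear_combination hc1 - h0)
                  (by simp <;> linear_combination hE - hr1 - hc1 + h0)
              apply le_antisymm hle
              intro z hz
              obtain ⟨hzL, hzR⟩ := Submodule.mem_inf.1 hz
              obtain ⟨hz1, hz2⟩ := (mem_JL F z).1 hzL
              obtain ⟨hz3, hz4⟩ := (mem_JR F z).1 hzR
              have ex2 : x (a1, b2) = -x (a1, b1) := by linear_combination hr1
              have ex3 : x (a2, b1) = -x (a1, b1) := by linear_combination hc1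
              have ex4 : x (a2, b2) = x (a1, b1) := by linear_combination hE - hr1 - hc1
              have ez2 : z (a1, b2) = -z (a1, b1) := by linear_combination hz1
              have ez3 : z (a2, b1) = -z (a1, b1) := by linear_combination hz3
              have ez4 : z (a2, b2) = z (a1, b1) := by linear_combination hz2 - hz3
              have hzeq : z = (z (a1, b1) * (x (a1, b1))⁻¹) • x := by
                refine ext4 ?_ ?_ ?_ ?_ <;>
                  simp only [MAsmul_apply, ex2, ex3, ex4, ez2, ez3, ez4] <;>
                  field_simp
              rw [hzeq]
              exact J.smul_mem _ hxJ
    · rintro (rfl | rfl | rfl | rfl | rfl | rfl)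
      · exact fun a x hx => by simp_all
      · intro a x hx
        obtain ⟨h1, h2⟩ := Submodule.mem_inf.1 hx
        exact ⟨Submodule.mem_inf.2 ⟨(isIdeal_JL F a x h1).1, (isIdeal_JR F a x h2).1⟩,
          Submodule.mem_inf.2 ⟨(isIdeal_JL F a x h1).2, (isIdeal_JR F a x h2).2⟩⟩
      · exact isIdeal_JL F
      · exact isIdeal_JR F
      · exact isIdeal_ker F
      · exact fun a x _ => ⟨trivial, trivial⟩
  · -- pairwise distinctness
    have hDL : (MonoidAlgebra.single (a1, b1) 1 - MonoidAlgebra.single (a1, b2) 1 : MonoidAlgebra F RB) ∈ JL F := (mem_JL F _).2 ⟨by simp, by simp⟩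
    have hDR : (MonoidAlgebra.single (a1, b1) 1 - MonoidAlgebra.single (a1, b2) 1 : MonoidAlgebra F RB) ∉ JR F := fun h => by
      have := ((mem_JR F _).1 h).1
      simp at this
    have hDk : (MonoidAlgebra.single (a1, b1) 1 - MonoidAlgebra.single (a1, b2) 1 : MonoidAlgebra F RB) ∈ LinearMap.ker (coeffSum F) := (mem_ker F _).2 (by simp)
    have hEL : (MonoidAlgebra.single (a1, b1) 1 - MonoidAlgebra.single (a2, b1) 1 : MonoidAlgebra F RB) ∉ JL F := fun h => by
      have := ((mem_JL F _).1 h).1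
      simp at this
    have hER : (MonoidAlgebra.single (a1, b1) 1 - MonoidAlgebra.single (a2, b1) 1 : MonoidAlgebra F RB) ∈ JR F := (mem_JR F _).2 ⟨by simp, by simp⟩
    have hEk : (MonoidAlgebra.single (a1, b1) 1 - MonoidAlgebra.single (a2, b1) 1 : MonoidAlgebra F RB) ∈ LinearMap.ker (coeffSum F) := (mem_ker F _).2 (by simp)
    have hCL : (MonoidAlgebra.single (a1, b1) 1 - MonoidAlgebra.single (a1, b2) 1 - MonoidAlgebra.single (a2, b1) 1 + MonoidAlgebra.single (a2, b2) 1 : MonoidAlgebra F RB) ∈ JL F := (mem_JL F _).2 ⟨by simp, by simp⟩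
    have hCR : (MonoidAlgebra.single (a1, b1) 1 - MonoidAlgebra.single (a1, b2) 1 - MonoidAlgebra.single (a2, b1) 1 + MonoidAlgebra.single (a2, b2) 1 : MonoidAlgebra F RB) ∈ JR F := (mem_JR F _).2 ⟨by simp, by simp⟩
    have hCinf : (MonoidAlgebra.single (a1, b1) 1 - MonoidAlgebra.single (a1, b2) 1 - MonoidAlgebra.single (a2, b1) 1 + MonoidAlgebra.single (a2, b2) 1 : MonoidAlgebra F RB) ∈ JL F ⊓ JR F := Submodule.mem_inf.2 ⟨hCL, hCR⟩
    have hCk : (MonoidAlgebra.single (a1, b1) 1 - MonoidAlgebra.single (a1, b2) 1 - MonoidAlgebra.single (a2, b1) 1 + MonoidAlgebra.single (a2, b2) 1 : MonoidAlgebra F RB) ∈ LinearMap.ker (coeffSum F) := (mem_ker F _).2 (by simp)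
    have hCne : (MonoidAlgebra.single (a1, b1) 1 - MonoidAlgebra.single (a1, b2) 1 - MonoidAlgebra.single (a2, b1) 1 + MonoidAlgebra.single (a2, b2) 1 : MonoidAlgebra F RB) ≠ 0 := fun h => by
      have h1 : (MonoidAlgebra.single (a1, b1) 1 - MonoidAlgebra.single (a1, b2) 1 - MonoidAlgebra.single (a2, b1) 1 + MonoidAlgebra.single (a2, b2) 1 : MonoidAlgebra F RB) (a1, b1) = (0 : MonoidAlgebra F RB) (a1, b1) := by rw [h]
      simp at h1
    have heL : (MonoidAlgebra.single (a1, b1) 1 : MonoidAlgebra F RB) ∉ JL F := fun h => by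
      have := ((mem_JL F _).1 h).1
      simp at this
    have heR : (MonoidAlgebra.single (a1, b1) 1 : MonoidAlgebra F RB) ∉ JR F := fun h => by
      have := ((mem_JR F _).1 h).1
      simp at this
    have hek : (MonoidAlgebra.single (a1, b1) 1 : MonoidAlgebra F RB) ∉ LinearMap.ker (coeffSum F) := fun h => by
      have := (mem_ker F _).1 h
      simp at this
    have bot_ne : ∀ K : Submodule F (MonoidAlgebra F RB), (MonoidAlgebra.single (a1, b1) 1 - MonoidAlgebra.single (a1, b2) 1 - MonoidAlgebra.single (a2, b1) 1 + MonoidAlgebra.single (a2, b2) 1 : MonoidAlgebra F RB) ∈ K → ⊥ ≠ K := by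
      intro K hK h
      apply hCne
      have : (MonoidAlgebra.single (a1, b1) 1 - MonoidAlgebra.single (a1, b2) 1 - MonoidAlgebra.single (a2, b1) 1 + MonoidAlgebra.single (a2, b2) 1 : MonoidAlgebra F RB) ∈ (⊥ : Submodule F (MonoidAlgebra F RB)) := by rw [h]; exact hK
      simpa using this
    refine List.Pairwise.cons ?_ (List.Pairwise.cons ?_ (List.Pairwise.cons ?_
      (List.Pairwise.cons ?_ (List.Pairwise.cons ?_ (List.pairwise_singleton _ _)))))
    · intro b hb
      fin_cases hb
      · exact bot_ne _ hCinf
      · exact bot_ne _ hCL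
      · exact bot_ne _ hCR
      · exact bot_ne _ hCk
      · exact bot_ne _ trivial
    · intro b hb
      fin_cases hb
      · intro h
        exact hDR (Submodule.mem_inf.1 (by rw [h]; exact hDL)).2
      · intro h
        exact hEL (Submodule.mem_inf.1 (by rw [h]; exact hER)).1
      · intro h
        exact hDR (Submodule.mem_inf.1 (by rw [h]; exact hDk)).2
      · intro h
        exact heL (Submodule.mem_inf.1 (by rw [h]; trivial)).1
    · intro b hb
      fin_cases hb
      · intro h
        exact hDR (h ▸ hDL)
      · intro h
        exact hEL (by rw [h]; exact hEk)
      · intro h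
        exact heL (by rw [h]; trivial)
    · intro b hb
      fin_cases hb
      · intro h
        exact hDR (by rw [h]; exact hDk)
      · intro h
        exact heR (by rw [h]; trivial)
    · intro b hb
      fin_cases hb
      · intro h
        exact hek (by rw [h]; trivial)
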